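/- Let P be a probability measure on (T, B(T)). Assume that for every window W', every D ∈ B(T_{W'}) and every ε > 0 there exists a window Ŵ (depending on W', D, ε) such that W' is contained in the interior of Ŵ and |P(D ∩ E) − P(D)P(E)| < ε for every E ∈ B(T_{Ŵ^c}). Then the tail σ-algebra B_{−∞}(T) is P-trivial, i.e. every E ∈ B_{−∞}(T) satisfies P(E) = 0 or P(E) = 1. -/

import Mathlib

open MeasureTheory Set symmDiff

noncomputable section

/-- Euclidean space `ℝ^ℓ`. -/
abbrev V (ℓ : ℕ) := EuclideanSpace ℝ (Fin ℓ)

/-- The space of tessellations, identified with their boundaries: closed subsets of `ℝ^ℓ`. -/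
def Tess (ℓ : ℕ) : Type := {F : Set (V ℓ) // IsClosed F}

/-- For `A ⊆ ℝ^ℓ`, the σ-algebra `B(T_A)` on the space of tessellations, generated by the
sets `{F : F ∩ C = ∅}` with `C` compact and `C ⊆ A`. -/
def tessSigma (ℓ : ℕ) (A : Set (V ℓ)) : MeasurableSpace (Tess ℓ) :=
  MeasurableSpace.generateFrom
    {s : Set (Tess ℓ) | ∃ C : Set (V ℓ), IsCompact C ∧ C ⊆ A ∧ s = {F : Tess ℓ | F.1 ∩ C = ∅}}

/-- The σ-algebra `B(T)` (obtained for `A = univ`), as the ambient measurable structure. -/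
instance (ℓ : ℕ) : MeasurableSpace (Tess ℓ) := tessSigma ℓ Set.univ

/-- A window: a compact convex polytope with nonempty interior. -/
def IsWindow (ℓ : ℕ) (W : Set (V ℓ)) : Prop :=
  (∃ S : Finset (V ℓ), W = convexHull ℝ (S : Set (V ℓ))) ∧ (interior W).Nonempty

/-- The cube `[-n, n]^ℓ`. -/
def cube (ℓ n : ℕ) : Set (V ℓ) := {x | ∀ i, |x i| ≤ (n : ℝ)}

/-- The tail σ-algebra `B_{-∞}(T) = ⋂_{n ≥ 1} B(T_{W_n^c})` with `W_n = [-n,n]^ℓ`. -/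
def tailSigma (ℓ : ℕ) : MeasurableSpace (Tess ℓ) :=
  ⨅ n : ℕ, tessSigma ℓ (cube ℓ (n + 1))ᶜ

/-! ### Auxiliary lemmas -/

lemma coord_le_norm {ℓ : ℕ} (x : V ℓ) (i : Fin ℓ) : |x i| ≤ ‖x‖ := by
  have h := EuclideanSpace.norm_eq x
  rw [h]
  have : |x i| = Real.sqrt (‖x i‖ ^ 2) := by
    rw [Real.sqrt_sq_eq_abs]; simp [abs_abs]
  rw [this]
  apply Real.sqrt_le_sqrt
  exact Finset.single_le_sum (f := fun j => ‖x j‖ ^ 2) (fun j _ => by positivity) (Finset.mem_univ i)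

lemma cube_convex {ℓ n : ℕ} : cube ℓ n = convexHull ℝ
    ((⇑(WithLp.linearEquiv 2 ℝ (Fin ℓ → ℝ)).symm) ''
      (univ.pi fun _ : Fin ℓ => ({-(n:ℝ), (n:ℝ)} : Set ℝ))) := by
  have him := ((WithLp.linearEquiv 2 ℝ (Fin ℓ → ℝ)).symm.toLinearMap).image_convexHull
    (univ.pi fun _ : Fin ℓ => ({-(n:ℝ), (n:ℝ)} : Set ℝ))
  simp only [LinearEquiv.coe_toLinearMap] at him
  rw [← him, convexHull_pi]
  ext x
  simp only [cube, mem_setOf_eq, mem_image]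
  constructor
  · intro hx
    refine ⟨(WithLp.linearEquiv 2 ℝ (Fin ℓ → ℝ)) x, ?_, ?_⟩
    · intro i _
      rw [convexHull_pair, segment_eq_Icc (by simp : -(n:ℝ) ≤ n)]
      exact abs_le.mp (hx i)
    · simp
  · rintro ⟨y, hy, rfl⟩
    intro i
    have := hy i (mem_univ i)
    rw [convexHull_pair, segment_eq_Icc (by simp : -(n:ℝ) ≤ n)] at this
    exact abs_le.mpr this

lemma cube_window {ℓ n : ℕ} : IsWindow ℓ (cube ℓ (n+1)) := by
  constructor
  · have hfin : (((⇑(WithLp.linearEquiv 2 ℝ (Fin ℓ → ℝ)).symm) ''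
        (univ.pi fun _ : Fin ℓ => ({-((n+1:ℕ):ℝ), ((n+1:ℕ):ℝ)} : Set ℝ))) : Set (V ℓ)).Finite := by
      apply Set.Finite.image
      exact Set.Finite.pi fun _ => (finite_singleton _).insert _
    exact ⟨hfin.toFinset, by rw [hfin.coe_toFinset]; exact cube_convex⟩
  · refine ⟨0, ?_⟩
    have hsub : Metric.ball (0 : V ℓ) 1 ⊆ cube ℓ (n+1) := by
      intro x hx i
      have h1 : ‖x‖ < 1 := by simpa [Metric.mem_ball] using hx
      have h2 := coord_le_norm x i
      have h3 : |x i| ≤ 1 := le_trans h2 h1.le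
      exact h3.trans (by push_cast; linarith)
    exact interior_maximal hsub Metric.isOpen_ball (by simp)

lemma compact_subset_cube {ℓ : ℕ} {C : Set (V ℓ)} (hC : IsCompact C) :
    ∃ n : ℕ, C ⊆ cube ℓ (n+1) := by
  obtain ⟨R, hR⟩ := hC.isBounded.exists_norm_le
  obtain ⟨n, hn⟩ := exists_nat_ge R
  refine ⟨n, fun x hx i => ?_⟩
  have := (coord_le_norm x i).trans ((hR x hx).trans hn)
  exact this.trans (by push_cast; linarith)

lemma tessSigma_mono {ℓ : ℕ} {A B : Set (V ℓ)} (hAB : A ⊆ B) :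
    tessSigma ℓ A ≤ tessSigma ℓ B := by
  apply MeasurableSpace.generateFrom_mono
  rintro s ⟨C, hC, hCA, rfl⟩
  exact ⟨C, hC, hCA.trans hAB, rfl⟩

lemma cube_mono {ℓ : ℕ} {n m : ℕ} (hnm : n ≤ m) : cube ℓ n ⊆ cube ℓ m :=
  fun x hx i => (hx i).trans (by show (n:ℝ) ≤ m; exact_mod_cast hnm)

/-- The union of the σ-algebras of the cubes. -/
def cubeAlg (ℓ : ℕ) : Set (Set (Tess ℓ)) :=
  {s | ∃ n : ℕ, MeasurableSet[tessSigma ℓ (cube ℓ (n+1))] s}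

lemma isSetAlgebra_cubeAlg (ℓ : ℕ) : MeasureTheory.IsSetAlgebra (cubeAlg ℓ) where
  empty_mem := ⟨0, @MeasurableSet.empty _ (tessSigma ℓ (cube ℓ (0+1)))⟩
  compl_mem := fun s ⟨n, hn⟩ => ⟨n, hn.compl⟩
  union_mem := fun {s t} ⟨n, hn⟩ ⟨m, hm⟩ => by
    exact ⟨max n m, MeasurableSet.union (m := tessSigma ℓ (cube ℓ (max n m + 1)))
      (tessSigma_mono (cube_mono (by omega)) s hn)
      (tessSigma_mono (cube_mono (by omega)) t hm)⟩

lemma ambient_eq_generateFrom (ℓ : ℕ) :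
    (inferInstance : MeasurableSpace (Tess ℓ)) = MeasurableSpace.generateFrom (cubeAlg ℓ) := by
  apply le_antisymm
  · apply MeasurableSpace.generateFrom_le
    rintro s ⟨C, hC, -, rfl⟩
    obtain ⟨n, hCn⟩ := compact_subset_cube hC
    exact MeasurableSpace.measurableSet_generateFrom
      ⟨n, MeasurableSpace.measurableSet_generateFrom ⟨C, hC, hCn, rfl⟩⟩
  · apply MeasurableSpace.generateFrom_le
    rintro s ⟨n, hn⟩
    exact tessSigma_mono (subset_univ _) s hn

/-- Lemma 1 of the paper. If for every window `W'`, every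
`D ∈ B(T_{W'})` and every `ε > 0` there is a window `Ŵ` with `W' ⊆ Int Ŵ` such that
`|P(D ∩ E) − P(D)P(E)| < ε` for all `E ∈ B(T_{Ŵᶜ})`, then the tail σ-algebra is `P`-trivial. -/
theorem stit_trivial_tail_criterion (ℓ : ℕ) (P : Measure (Tess ℓ)) [IsProbabilityMeasure P]
    (h : ∀ W' : Set (V ℓ), IsWindow ℓ W' →
      ∀ D : Set (Tess ℓ), MeasurableSet[tessSigma ℓ W'] D →
      ∀ ε : ℝ, 0 < ε →
      ∃ W : Set (V ℓ), IsWindow ℓ W ∧ W' ⊆ interior W ∧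
        ∀ E : Set (Tess ℓ), MeasurableSet[tessSigma ℓ Wᶜ] E →
          |(P (D ∩ E)).toReal - (P D).toReal * (P E).toReal| < ε) :
    ∀ E : Set (Tess ℓ), MeasurableSet[tailSigma ℓ] E → P E = 0 ∨ P E = 1 := by
  intro E hE
  -- E is measurable for the ambient σ-algebra
  have htail_le : tailSigma ℓ ≤ (inferInstance : MeasurableSpace (Tess ℓ)) :=
    le_trans (iInf_le _ 0) (tessSigma_mono (subset_univ _))
  have hEamb : MeasurableSet E := htail_le E hE
  have hdense : P.MeasureDense (cubeAlg ℓ) :=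
    Measure.MeasureDense.of_generateFrom_isSetAlgebra_finite P
      (isSetAlgebra_cubeAlg ℓ) (ambient_eq_generateFrom ℓ)
  set a := (P E).toReal with ha
  have ha1 : a ≤ 1 := by
    rw [ha]
    exact ENNReal.toReal_le_of_le_ofReal one_pos.le (by simpa using prob_le_one)
  have ha0 : 0 ≤ a := ENNReal.toReal_nonneg
  have key : ∀ ε : ℝ, 0 < ε → |a - a * a| < 3 * ε := by
    intro ε hε
    obtain ⟨D, hD𝒜, hsd⟩ := hdense.approx E hEamb (measure_ne_top P E) ε hε
    obtain ⟨n, hDn⟩ := hD𝒜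
    obtain ⟨W, hWwin, hWsub, hbound⟩ := h (cube ℓ (n+1)) cube_window D hDn ε hε
    obtain ⟨S, hS⟩ := hWwin.1
    have hWc : IsCompact W := hS ▸ S.finite_toSet.isCompact_convexHull ℝ
    obtain ⟨m, hWm⟩ := compact_subset_cube hWc
    have hle1 : tailSigma ℓ ≤ tessSigma ℓ (cube ℓ (m+1))ᶜ := iInf_le _ m
    have hEW : MeasurableSet[tessSigma ℓ Wᶜ] E :=
      tessSigma_mono (compl_subset_compl.mpr hWm) E (hle1 E hE)
    have hb := hbound E hEW
    set d := (P D).toReal with hd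
    set de := (P (D ∩ E)).toReal with hde
    set er := (P (E ∆ D)).toReal with her
    have hsd' : er < ε := by
      rw [her]
      exact (ENNReal.lt_ofReal_iff_toReal_lt (measure_ne_top _ _)).mp hsd
    have her0 : 0 ≤ er := ENNReal.toReal_nonneg
    -- basic inequalities
    have e1 : de ≤ a :=
      ENNReal.toReal_mono (measure_ne_top _ _) (measure_mono inter_subset_right)
    have e2 : a ≤ de + er := by
      have h1 : P E ≤ P (D ∩ E) + P (E ∆ D) := by
        refine le_trans (measure_le_inter_add_diff P E D) (add_le_add ?_ ?_)
        · rw [inter_comm]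
        · exact measure_mono (fun x hx => Or.inl hx)
      have h2 := ENNReal.toReal_mono
        (ENNReal.add_ne_top.mpr ⟨measure_ne_top _ _, measure_ne_top _ _⟩) h1
      rwa [ENNReal.toReal_add (measure_ne_top _ _) (measure_ne_top _ _)] at h2
    have e3 : d ≤ a + er := by
      have h1 : P D ≤ P (D ∩ E) + P (E ∆ D) := by
        refine le_trans (measure_le_inter_add_diff P D E) (add_le_add le_rfl ?_)
        exact measure_mono (fun x hx => Or.inr hx)
      have h2 := ENNReal.toReal_mono
        (ENNReal.add_ne_top.mpr ⟨measure_ne_top _ _, measure_ne_top _ _⟩) h1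
      rw [ENNReal.toReal_add (measure_ne_top _ _) (measure_ne_top _ _)] at h2
      have : de ≤ a := e1
      linarith
    have e4 : a ≤ d + er := by
      have h1 : P E ≤ P D + P (E ∆ D) := by
        refine le_trans (measure_le_inter_add_diff P E D) (add_le_add ?_ ?_)
        · exact measure_mono inter_subset_right
        · exact measure_mono (fun x hx => Or.inl hx)
      have h2 := ENNReal.toReal_mono
        (ENNReal.add_ne_top.mpr ⟨measure_ne_top _ _, measure_ne_top _ _⟩) h1
      rwa [ENNReal.toReal_add (measure_ne_top _ _) (measure_ne_top _ _)] at h2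
    rw [abs_sub_lt_iff] at hb ⊢
    constructor
    · nlinarith [hb.1, hb.2]
    · nlinarith [hb.1, hb.2]
  have haa : a = a * a := by
    by_contra hne
    have hpos : 0 < |a - a * a| := abs_pos.mpr (sub_ne_zero.mpr hne)
    have := key (|a - a * a| / 3) (by linarith)
    linarith
  have h01 : a = 0 ∨ a = 1 := by
    have hfac : a * (1 - a) = 0 := by ring_nf; linarith
    rcases mul_eq_zero.mp hfac with h0 | h1
    · exact Or.inl h0
    · exact Or.inr (by linarith)
  rcases h01 with h0 | h1
  · left
    have := ENNReal.toReal_eq_zero_iff (P E) |>.mp h0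
    exact this.resolve_right (measure_ne_top P E)
  · right
    have := ENNReal.ofReal_toReal (measure_ne_top P E)
    rw [← this, ← ha, h1]
    simp
end
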